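/- arXiv:1410.6895 — 3 statements merged into one kernel-verified Lean document; each statement's English description precedes it below -/
import Mathlib

section
/- Let A ∈ ℝ^{P×Q}, B = [[0, A],[Aᵀ, 0]], and K ≤ Q ≤ P. The maximum of trace(Wᵀ B W) over all W ∈ ℝ^{(P+Q)×K} with WᵀW = I_K is equal to the maximum of trace(Uᵀ A V) over U ∈ ℝ^{P×K}, V ∈ ℝ^{Q×K} with UᵀU = VᵀV = I_K. -/
open Matrix

lemma extend_on {P K : ℕ} (hKP : K ≤ P) (x : Fin K → EuclideanSpace ℝ (Fin P))
    (S : Set (Fin K)) [DecidablePred (· ∈ S)]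
    (hx : ∀ i ∈ S, ∀ j ∈ S, inner ℝ (x i) (x j) = (if i = j then (1:ℝ) else 0)) :
    ∃ u : Fin K → EuclideanSpace ℝ (Fin P), Orthonormal ℝ u ∧ ∀ i ∈ S, u i = x i := by
  classical
  set v : Fin P → EuclideanSpace ℝ (Fin P) :=
    fun j => if h : (j : ℕ) < K then x ⟨j, h⟩ else 0 with hv
  set s : Set (Fin P) := {j | ∃ h : (j : ℕ) < K, (⟨j, h⟩ : Fin K) ∈ S} with hs
  have hos : Orthonormal ℝ (s.restrict v) := by
    rw [orthonormal_iff_ite]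
    rintro ⟨i, hi, hiS⟩ ⟨j, hj, hjS⟩
    simp only [Set.restrict_apply, Set.restrict, hv, dif_pos hi, dif_pos hj]
    rw [hx _ hiS _ hjS]
    congr 1
    simp only [eq_iff_iff, Fin.mk.injEq, Subtype.mk.injEq, Fin.ext_iff]
  obtain ⟨b, hb⟩ := hos.exists_orthonormalBasis_extension_of_card_eq
    (by simp [finrank_euclideanSpace])
  refine ⟨fun i => b (Fin.castLE hKP i), b.orthonormal.comp _ (Fin.castLE_injective hKP), ?_⟩
  intro i hiS
  have hmem : (Fin.castLE hKP i) ∈ s := ⟨by simpa using i.isLt, by simpa using hiS⟩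
  show b (Fin.castLE hKP i) = x i
  rw [hb _ hmem]
  simp [hv]

lemma core {P Q K : ℕ} (hQP : Q ≤ P) (hK : K ≤ Q) (A : Matrix (Fin P) (Fin Q) ℝ)
    (lam : Fin K → ℝ) (X : Matrix (Fin P) (Fin K) ℝ) (Y : Matrix (Fin Q) (Fin K) ℝ)
    (hX : Xᵀ * X = diagonal lam) (hY : Yᵀ * Y = diagonal (fun i => 1 - lam i)) :
    ∃ (U : Matrix (Fin P) (Fin K) ℝ) (V : Matrix (Fin Q) (Fin K) ℝ),
      Uᵀ * U = 1 ∧ Vᵀ * V = 1 ∧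
      trace (Xᵀ * A * Y) + trace (Xᵀ * A * Y) ≤ trace (Uᵀ * A * V) := by
  classical
  have hKP : K ≤ P := hK.trans hQP
  have hXe : ∀ i j, ∑ p, X p i * X p j = diagonal lam i j := by
    intro i j; rw [← hX]; simp [mul_apply]
  have hYe : ∀ i j, ∑ q, Y q i * Y q j = diagonal (fun i => 1 - lam i) i j := by
    intro i j; rw [← hY]; simp [mul_apply]
  have hlam0 : ∀ i, 0 ≤ lam i := by
    intro i
    have := hXe i i
    simp only [diagonal_apply_eq] at this
    rw [← this]
    exact Finset.sum_nonneg fun p _ => mul_self_nonneg _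
  have hlam1 : ∀ i, lam i ≤ 1 := by
    intro i
    have := hYe i i
    simp only [diagonal_apply_eq] at this
    nlinarith [Finset.sum_nonneg (fun q (_ : q ∈ Finset.univ) => mul_self_nonneg (Y q i))]
  set c : Fin K → ℝ := fun i => Real.sqrt (lam i) with hc
  set s : Fin K → ℝ := fun i => Real.sqrt (1 - lam i) with hsdef
  have hc2 : ∀ i, c i * c i = lam i := fun i => Real.mul_self_sqrt (hlam0 i)
  have hs2 : ∀ i, s i * s i = 1 - lam i := fun i => Real.mul_self_sqrt (by linarith [hlam1 i])
  have hcpos : ∀ i, 0 ≤ c i := fun i => Real.sqrt_nonneg _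
  have hspos : ∀ i, 0 ≤ s i := fun i => Real.sqrt_nonneg _
  have hcne : ∀ i, lam i ≠ 0 → c i ≠ 0 := by
    intro i hi
    simp only [hc, ne_eq, Real.sqrt_eq_zero (hlam0 i)]; exact hi
  have hsne : ∀ i, 1 - lam i ≠ 0 → s i ≠ 0 := by
    intro i hi
    simp only [hsdef, ne_eq, Real.sqrt_eq_zero (by linarith [hlam1 i] : (0:ℝ) ≤ 1 - lam i)]
    exact hi
  set xu : Fin K → EuclideanSpace ℝ (Fin P) :=
    fun i => (c i)⁻¹ • (WithLp.toLp 2 (fun p => X p i : Fin P → ℝ) : EuclideanSpace ℝ (Fin P)) with hxu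
  set yv : Fin K → EuclideanSpace ℝ (Fin Q) :=
    fun i => (s i)⁻¹ • (WithLp.toLp 2 (fun q => Y q i : Fin Q → ℝ) : EuclideanSpace ℝ (Fin Q)) with hyv
  have hxcond : ∀ i ∈ {i | lam i ≠ 0}, ∀ j ∈ {i | lam i ≠ 0},
      inner ℝ (xu i) (xu j) = (if i = j then (1:ℝ) else 0) := by
    intro i hi j hj
    simp only [Set.mem_setOf_eq] at hi hj
    have hci := hcne i hi
    have hcj := hcne j hj
    simp only [hxu, PiLp.inner_apply, RCLike.inner_apply', conj_trivial, PiLp.smul_apply, PiLp.toLp_apply, Pi.smul_apply,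
      smul_eq_mul]
    have heq : ∑ p, (c i)⁻¹ * X p i * ((c j)⁻¹ * X p j) = (c i)⁻¹ * (c j)⁻¹ *
        ∑ p, X p i * X p j := by
      rw [Finset.mul_sum]; congr 1; ext p; ring
    rw [heq, hXe i j]
    by_cases hij : i = j
    · subst hij
      simp only [diagonal_apply_eq, if_pos rfl, if_true]
      rw [← hc2 i]
      field_simp
    · simp [diagonal_apply_ne _ hij, hij]
  have hycond : ∀ i ∈ {i | 1 - lam i ≠ 0}, ∀ j ∈ {i | 1 - lam i ≠ 0},
      inner ℝ (yv i) (yv j) = (if i = j then (1:ℝ) else 0) := by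
    intro i hi j hj
    simp only [Set.mem_setOf_eq] at hi hj
    have hsi := hsne i hi
    have hsj := hsne j hj
    simp only [hyv, PiLp.inner_apply, RCLike.inner_apply', conj_trivial, PiLp.smul_apply, PiLp.toLp_apply, Pi.smul_apply,
      smul_eq_mul]
    have heq : ∑ q, (s i)⁻¹ * Y q i * ((s j)⁻¹ * Y q j) = (s i)⁻¹ * (s j)⁻¹ *
        ∑ q, Y q i * Y q j := by
      rw [Finset.mul_sum]; congr 1; ext q; ring
    rw [heq, hYe i j]
    by_cases hij : i = j
    · subst hij
      simp only [diagonal_apply_eq, if_pos rfl, if_true]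
      rw [← hs2 i]
      field_simp
    · simp [diagonal_apply_ne _ hij, hij]
  obtain ⟨u, hu, huS⟩ := extend_on hKP xu {i | lam i ≠ 0} hxcond
  obtain ⟨v, hvon, hvS⟩ := extend_on (hK : K ≤ Q) yv {i | 1 - lam i ≠ 0} hycond
  have hXc : ∀ i p, X p i = c i * u i p := by
    intro i p
    by_cases hi : lam i = 0
    · have hz : ∑ p, X p i * X p i = 0 := by rw [hXe i i]; simp [hi]
      have h0 := (Finset.sum_eq_zero_iff_of_nonneg
        (fun p (_ : p ∈ Finset.univ) => mul_self_nonneg (X p i))).mp hz p (Finset.mem_univ p)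
      have hx0 : X p i = 0 := by nlinarith
      have hc0 : c i = 0 := by simp [hc, hi]
      simp [hx0, hc0]
    · have hup : u i p = (c i)⁻¹ * X p i := by
        rw [huS i hi]; rfl
      rw [hup]
      field_simp [hcne i hi]
  have hYc : ∀ i q, Y q i = s i * v i q := by
    intro i q
    by_cases hi : 1 - lam i = 0
    · have hz : ∑ q, Y q i * Y q i = 0 := by rw [hYe i i]; simp [hi]
      have h0 := (Finset.sum_eq_zero_iff_of_nonneg
        (fun q (_ : q ∈ Finset.univ) => mul_self_nonneg (Y q i))).mp hz q (Finset.mem_univ q)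
      have hy0 : Y q i = 0 := by nlinarith
      have hs0 : s i = 0 := by simp [hsdef, hi]
      simp [hy0, hs0]
    · have hvp : v i q = (s i)⁻¹ * Y q i := by
        rw [hvS i hi]; rfl
      rw [hvp]
      field_simp [hsne i hi]
  set g : Fin K → ℝ := fun i => ∑ q, ∑ p, u i p * A p q * v i q with hg
  set ε : Fin K → ℝ := fun i => if g i < 0 then -1 else 1 with he
  refine ⟨Matrix.of fun p i => u i p, Matrix.of fun q i => ε i * v i q, ?_, ?_, ?_⟩
  · ext i j
    have h := (orthonormal_iff_ite.mp hu) i j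
    simp only [PiLp.inner_apply, RCLike.inner_apply', conj_trivial] at h
    simp only [mul_apply, transpose_apply, Matrix.of_apply, one_apply]
    rw [h]
  · ext i j
    have h := (orthonormal_iff_ite.mp hvon) i j
    simp only [PiLp.inner_apply, RCLike.inner_apply', conj_trivial] at h
    simp only [mul_apply, transpose_apply, Matrix.of_apply, one_apply]
    have hsum : ∑ q, ε i * v i q * (ε j * v j q) = ε i * ε j * ∑ q, v i q * v j q := by
      rw [Finset.mul_sum]; congr 1; ext q; ring
    rw [hsum, h]
    by_cases hij : i = j
    · subst hij
      simp only [if_pos rfl, mul_one]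
      by_cases hgc : g i < 0 <;> simp [he, hgc]
    · simp [hij]
  · have htr1 : trace (Xᵀ * A * Y) = ∑ i, c i * s i * g i := by
      rw [trace]
      congr 1; ext i
      simp only [diag_apply, mul_apply, transpose_apply, hg]
      rw [Finset.mul_sum]
      congr 1; ext q
      rw [Finset.sum_mul, Finset.mul_sum]
      congr 1; ext p
      rw [hXc i p, hYc i q]; ring
    have htr2 : trace ((Matrix.of fun p i => u i p)ᵀ * A * Matrix.of fun q i => ε i * v i q)
        = ∑ i, ε i * g i := by
      rw [trace]
      congr 1; ext i
      simp only [diag_apply, mul_apply, transpose_apply, Matrix.of_apply, hg]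
      rw [Finset.mul_sum]
      congr 1; ext q
      rw [Finset.sum_mul, Finset.mul_sum]
      congr 1; ext p
      ring
    rw [htr1, htr2, ← Finset.sum_add_distrib]
    apply Finset.sum_le_sum
    intro i _
    by_cases hgi : g i < 0
    · have hei : ε i = -1 := by simp [he, hgi]
      rw [hei]
      nlinarith [mul_nonneg (hcpos i) (hspos i), hc2 i, hs2 i]
    · have hei : ε i = 1 := by simp [he, hgi]
      rw [hei]
      push_neg at hgi
      nlinarith [sq_nonneg (c i - s i), hc2 i, hs2 i]

section helpers
variable {m n k : Type*} [Fintype m] [Fintype n] [Fintype k] [DecidableEq k]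

lemma entry_bound (M : Matrix m k ℝ) (h : Mᵀ * M = 1) (p : m) (i : k) : |M p i| ≤ 1 := by
  have hcol : ∑ r, M r i * M r i = 1 := by
    have := congrFun (congrFun h i) i
    simpa [mul_apply] using this
  have hsq : M p i * M p i ≤ 1 := by
    rw [← hcol]
    exact Finset.single_le_sum (fun r _ => mul_self_nonneg (M r i)) (Finset.mem_univ p)
  rw [abs_le]
  constructor <;> nlinarith

lemma trace_expand (A : Matrix m n ℝ) (U : Matrix m k ℝ) (V : Matrix n k ℝ) :
    trace (Uᵀ * A * V) = ∑ i, ∑ q, ∑ p, U p i * A p q * V q i := by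
  simp only [trace, diag_apply, mul_apply, transpose_apply, Finset.sum_mul]

lemma trace_bound2 (A : Matrix m n ℝ) (U : Matrix m k ℝ) (V : Matrix n k ℝ)
    (hU : Uᵀ * U = 1) (hV : Vᵀ * V = 1) :
    trace (Uᵀ * A * V) ≤ ∑ _i : k, ∑ q : n, ∑ p : m, |A p q| := by
  rw [trace_expand]
  refine Finset.sum_le_sum fun i _ => Finset.sum_le_sum fun q _ => Finset.sum_le_sum fun p _ => ?_
  have h1 := entry_bound U hU p i
  have h2 := entry_bound V hV q i
  have h3 := abs_nonneg (U p i)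
  have h4 := abs_nonneg (V q i)
  have h5 := abs_nonneg (A p q)
  calc U p i * A p q * V q i ≤ |U p i * A p q * V q i| := le_abs_self _
    _ = |U p i| * |A p q| * |V q i| := by rw [abs_mul, abs_mul]
    _ ≤ 1 * |A p q| * 1 := by
      apply mul_le_mul (mul_le_mul h1 le_rfl h5 zero_le_one) h2 h4
      positivity
    _ = |A p q| := by ring

lemma trace_bound1 (B : Matrix m m ℝ) (W : Matrix m k ℝ) (h : Wᵀ * W = 1) :
    trace (Wᵀ * B * W) ≤ ∑ _i : k, ∑ q : m, ∑ p : m, |B p q| := by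
  exact trace_bound2 B W W h h

lemma std_isometry (n k : ℕ) (h : k ≤ n) :
    (Matrix.of fun (p : Fin n) (i : Fin k) => if p = Fin.castLE h i then (1:ℝ) else 0)ᵀ *
      (Matrix.of fun (p : Fin n) (i : Fin k) => if p = Fin.castLE h i then (1:ℝ) else 0) = 1 := by
  ext i j
  simp only [mul_apply, transpose_apply, Matrix.of_apply, one_apply, ite_mul, one_mul, zero_mul]
  rw [Finset.sum_ite_eq' Finset.univ (Fin.castLE h i)]
  simp [Fin.castLE_inj, eq_comm]

end helpers

lemma half_construct {P Q K : ℕ} (A : Matrix (Fin P) (Fin Q) ℝ)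
    (U : Matrix (Fin P) (Fin K) ℝ) (V : Matrix (Fin Q) (Fin K) ℝ)
    (hU : Uᵀ * U = 1) (hV : Vᵀ * V = 1) :
    ∃ W : Matrix (Fin P ⊕ Fin Q) (Fin K) ℝ, Wᵀ * W = 1 ∧
      trace (Wᵀ * fromBlocks 0 A Aᵀ 0 * W) = trace (Uᵀ * A * V) := by
  set a : ℝ := (Real.sqrt 2)⁻¹ with ha
  have haa : a * a = 1/2 := by
    rw [ha, ← mul_inv, Real.mul_self_sqrt (by norm_num : (0:ℝ) ≤ 2)]
    norm_num
  refine ⟨fromRows (a • U) (a • V), ?_, ?_⟩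
  · rw [transpose_fromRows, fromCols_mul_fromRows, transpose_smul, transpose_smul]
    simp only [Matrix.smul_mul, Matrix.mul_smul, smul_smul, hU, hV]
    rw [← add_smul, haa]
    norm_num
  · rw [Matrix.mul_assoc, fromBlocks_mul_fromRows, transpose_fromRows,
      fromCols_mul_fromRows]
    simp only [Matrix.zero_mul, smul_zero, zero_add, add_zero, transpose_smul, Matrix.smul_mul,
      Matrix.mul_smul, smul_smul, trace_add, trace_smul, smul_eq_mul, haa]
    have hswap : Vᵀ * (Aᵀ * U) = (Uᵀ * (A * V))ᵀ := by
      rw [transpose_mul, transpose_mul, transpose_transpose, Matrix.mul_assoc]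
    rw [hswap, trace_transpose, Matrix.mul_assoc]
    ring

/-- The maximum of trace(Wᵀ B W) over W with K orthonormal columns, for
B = [[0,A],[Aᵀ,0]], equals the maximum of trace(Uᵀ A V) over U, V with K
orthonormal columns. -/
theorem stmt_3 (P Q K : ℕ) (hQP : Q ≤ P) (hK : K ≤ Q)
    (A : Matrix (Fin P) (Fin Q) ℝ) :
    sSup {t : ℝ | ∃ W : Matrix (Fin P ⊕ Fin Q) (Fin K) ℝ,
        Wᵀ * W = 1 ∧ t = trace (Wᵀ * fromBlocks 0 A Aᵀ 0 * W)}
      = sSup {t : ℝ | ∃ (U : Matrix (Fin P) (Fin K) ℝ) (V : Matrix (Fin Q) (Fin K) ℝ),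
        Uᵀ * U = 1 ∧ Vᵀ * V = 1 ∧ t = trace (Uᵀ * A * V)} := by
  classical
  have hKP : K ≤ P := hK.trans hQP
  set S₁ : Set ℝ := {t : ℝ | ∃ W : Matrix (Fin P ⊕ Fin Q) (Fin K) ℝ,
      Wᵀ * W = 1 ∧ t = trace (Wᵀ * fromBlocks 0 A Aᵀ 0 * W)} with hS₁
  set S₂ : Set ℝ := {t : ℝ | ∃ (U : Matrix (Fin P) (Fin K) ℝ) (V : Matrix (Fin Q) (Fin K) ℝ),
      Uᵀ * U = 1 ∧ Vᵀ * V = 1 ∧ t = trace (Uᵀ * A * V)} with hS₂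
  have hsub : S₂ ⊆ S₁ := by
    rintro t ⟨U, V, hU, hV, rfl⟩
    obtain ⟨W, hW, htr⟩ := half_construct A U V hU hV
    exact ⟨W, hW, htr.symm⟩
  have hbdd1 : BddAbove S₁ := by
    refine ⟨∑ _i : Fin K, ∑ q, ∑ p, |fromBlocks 0 A Aᵀ 0 p q|, ?_⟩
    rintro t ⟨W, hW, rfl⟩
    exact trace_bound1 _ W hW
  have hbdd2 : BddAbove S₂ := by
    refine ⟨∑ _i : Fin K, ∑ q, ∑ p, |A p q|, ?_⟩
    rintro t ⟨U, V, hU, hV, rfl⟩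
    exact trace_bound2 A U V hU hV
  have hne2 : S₂.Nonempty := by
    refine ⟨_, Matrix.of fun p i => if p = Fin.castLE hKP i then (1:ℝ) else 0,
      Matrix.of fun q i => if q = Fin.castLE hK i then (1:ℝ) else 0,
      std_isometry P K hKP, std_isometry Q K hK, rfl⟩
  have hne1 : S₁.Nonempty := hne2.mono hsub
  refine le_antisymm (csSup_le hne1 ?_) (csSup_le_csSup hbdd1 hne2 hsub)
  rintro t ⟨W, hW, rfl⟩
  set X : Matrix (Fin P) (Fin K) ℝ := Matrix.of fun p i => W (Sum.inl p) i with hXdef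
  set Y : Matrix (Fin Q) (Fin K) ℝ := Matrix.of fun q i => W (Sum.inr q) i with hYdef
  have hWr : W = fromRows X Y := by
    ext pq i; cases pq <;> rfl
  have hWW : Xᵀ * X + Yᵀ * Y = 1 := by
    rw [hWr, transpose_fromRows, fromCols_mul_fromRows] at hW
    exact hW
  have htrW : trace (Wᵀ * fromBlocks 0 A Aᵀ 0 * W)
      = trace (Xᵀ * A * Y) + trace (Xᵀ * A * Y) := by
    rw [hWr, Matrix.mul_assoc, transpose_fromRows, fromBlocks_mul_fromRows,
      fromCols_mul_fromRows]
    simp only [Matrix.zero_mul, Matrix.mul_zero, zero_add, add_zero]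
    rw [trace_add]
    have h2 : Yᵀ * (Aᵀ * X) = (Xᵀ * (A * Y))ᵀ := by
      rw [transpose_mul, transpose_mul, transpose_transpose, Matrix.mul_assoc]
    rw [h2, trace_transpose, Matrix.mul_assoc]
  have hG : (Xᵀ * X).IsHermitian := by
    have h := Matrix.isHermitian_conjTranspose_mul_self X
    rwa [conjTranspose_eq_transpose_of_trivial] at h
  set lam : Fin K → ℝ := hG.eigenvalues with hlam
  set O : Matrix (Fin K) (Fin K) ℝ := ↑(hG.eigenvectorUnitary) with hO
  have hstar : star O = Oᵀ := by
    rw [Matrix.star_eq_conjTranspose, conjTranspose_eq_transpose_of_trivial]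
  have hdiag : Oᵀ * (Xᵀ * X) * O = diagonal lam := by
    have h := hG.conjStarAlgAut_star_eigenvectorUnitary
    simp only [Unitary.conjStarAlgAut_apply, star_star, Unitary.coe_star, RCLike.ofReal_real_eq_id,
      Function.id_comp] at h
    rw [← hstar]
    convert h using 2
  have hO1 : Oᵀ * O = 1 := by
    rw [← hstar]
    exact mem_unitaryGroup_iff'.mp (hG.eigenvectorUnitary).2
  have hO2 : O * Oᵀ = 1 := by
    rw [← hstar]
    exact mem_unitaryGroup_iff.mp (hG.eigenvectorUnitary).2
  have hX' : (X * O)ᵀ * (X * O) = diagonal lam := by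
    rw [transpose_mul]
    simp only [Matrix.mul_assoc] at hdiag ⊢
    exact hdiag
  have hYY : Yᵀ * Y = 1 - Xᵀ * X := eq_sub_of_add_eq' hWW
  have hY' : (Y * O)ᵀ * (Y * O) = diagonal (fun i => 1 - lam i) := by
    rw [transpose_mul, ← Matrix.mul_assoc, Matrix.mul_assoc Oᵀ Yᵀ Y, hYY,
      Matrix.mul_sub, Matrix.mul_one, Matrix.sub_mul, hO1, hdiag]
    have h1 : (1 : Matrix (Fin K) (Fin K) ℝ) = diagonal (fun _ => 1) := diagonal_one.symm
    rw [h1, diagonal_sub]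
  have htr' : trace ((X * O)ᵀ * A * (Y * O)) = trace (Xᵀ * A * Y) := by
    rw [transpose_mul]
    have hassoc : Oᵀ * Xᵀ * A * (Y * O) = Oᵀ * ((Xᵀ * A * Y) * O) := by
      simp only [Matrix.mul_assoc]
    rw [hassoc, trace_mul_comm, Matrix.mul_assoc, hO2, Matrix.mul_one]
  obtain ⟨U, V, hU, hV, hle⟩ := core hQP hK A lam (X * O) (Y * O) hX' hY'
  have hmem : trace (Uᵀ * A * V) ∈ S₂ := ⟨U, V, hU, hV, rfl⟩
  rw [htrW]
  calc trace (Xᵀ * A * Y) + trace (Xᵀ * A * Y)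
      = trace ((X*O)ᵀ * A * (Y*O)) + trace ((X*O)ᵀ * A * (Y*O)) := by rw [htr']
    _ ≤ trace (Uᵀ * A * V) := hle
    _ ≤ sSup S₂ := le_csSup hbdd2 hmem
end

section
/- For a minimal block-n TT decomposition of U with interface matrices U^{<m+1}_{(m+1)} ∈ ℝ^{R_m × I₁⋯I_m} and U^{>m}_{(1)} ∈ ℝ^{R_m × I_{m+1}⋯I_N}, the reshaped columns satisfy: span(U_{k,m}) ⊆ span((U^{<m+1}_{(m+1)})ᵀ) for m = 1,...,n−1, and span(U_{k,m}ᵀ) ⊆ span((U^{>m}_{(1)})ᵀ) for m = n,...,N, for every k = 1,...,K. Equivalently, U_{k,m} = (U^{<m+1}_{(m+1)})ᵀ U^{>m}_{k,(1)} for m < n and U_{k,m} = (U^{<m+1}_{k,(m+1)})ᵀ U^{>m}_{(1)} for m ≥ n. -/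
open Matrix

/-- Product of the first k matrices in a chain with compatible dependent sizes. -/
noncomputable def chainProd (T : ℕ → Type) [∀ n, Fintype (T n)] [DecidableEq (T 0)]
    (M : ∀ n, Matrix (T n) (T (n + 1)) ℝ) : (k : ℕ) → Matrix (T 0) (T k) ℝ
  | 0 => 1
  | k + 1 => chainProd T M k * M k

/-- The unique entry of a 1×1 matrix, obtained as the sum of all entries. -/
noncomputable def matEntry {α β : Type} [Fintype α] [Fintype β]
    (M : Matrix α β ℝ) : ℝ := ∑ a, ∑ b, M a b

/-- Entry of the k-th column of a tensor in block TT format. -/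
noncomputable def blockTTEntry (N K : ℕ) (I R : ℕ → ℕ)
    (UC : ∀ m, Fin K → Fin (I m) → Matrix (Fin (R m)) (Fin (R (m + 1))) ℝ)
    (k : Fin K) (i : ∀ p : Fin N, Fin (I p)) : ℝ :=
  matEntry (chainProd (fun m => Fin (R m))
    (fun m => if h : m < N then UC m k (i ⟨m, h⟩) else 0) N)

/-- The reshaping U_{k,m} of the k-th column u_k into an
(I₁⋯I_m) × (I_{m+1}⋯I_N) matrix. -/
noncomputable def reshapeCol (N K : ℕ) (I R : ℕ → ℕ)
    (UC : ∀ m, Fin K → Fin (I m) → Matrix (Fin (R m)) (Fin (R (m + 1))) ℝ)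
    (k : Fin K) (m : ℕ) :
    Matrix (∀ p : {q : Fin N // q.1 < m}, Fin (I p.1.1))
      (∀ p : {q : Fin N // ¬ q.1 < m}, Fin (I p.1.1)) ℝ :=
  Matrix.of fun ir ic => blockTTEntry N K I R UC k
    (fun p => if h : p.1 < m then ir ⟨p, h⟩ else ic ⟨p, h⟩)

/-- The transposed left interface matrix (U^{<m+1}_{(m+1)})ᵀ: contraction of
cores 1,…,m, rows indexed by the first m modes, columns by the rank index R_m. -/
noncomputable def leftInterface (N K : ℕ) (I R : ℕ → ℕ)
    (UC : ∀ m, Fin K → Fin (I m) → Matrix (Fin (R m)) (Fin (R (m + 1))) ℝ)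
    (k : Fin K) (m : ℕ) :
    Matrix (∀ p : {q : Fin N // q.1 < m}, Fin (I p.1.1)) (Fin (R m)) ℝ :=
  Matrix.of fun ir r => ∑ z : Fin (R 0),
    chainProd (fun p => Fin (R p))
      (fun p => if h : p < m ∧ p < N then UC p k (ir ⟨⟨p, h.2⟩, h.1⟩) else 0) m z r

/-- The right interface matrix U^{>m}_{(1)}: contraction of cores m+1,…,N, rows
indexed by the rank index R_m, columns by the last N−m modes. -/
noncomputable def rightInterface (N K : ℕ) (I R : ℕ → ℕ)
    (UC : ∀ m, Fin K → Fin (I m) → Matrix (Fin (R m)) (Fin (R (m + 1))) ℝ)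
    (k : Fin K) (m : ℕ) :
    Matrix (Fin (R m)) (∀ p : {q : Fin N // ¬ q.1 < m}, Fin (I p.1.1)) ℝ :=
  Matrix.of fun r ic => ∑ z : Fin (R (m + (N - m))),
    chainProd (fun p => Fin (R (m + p)))
      (fun p => if h : m + p < N then
          UC (m + p) k (ic ⟨⟨m + p, h⟩, Nat.not_lt.mpr (Nat.le_add_right m p)⟩) else 0) (N - m) r z

lemma chainProd_congr (T : ℕ → Type) [∀ n, Fintype (T n)] [DecidableEq (T 0)]
    (M M' : ∀ n, Matrix (T n) (T (n + 1)) ℝ) :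
    ∀ k, (∀ p, p < k → M p = M' p) → chainProd T M k = chainProd T M' k
  | 0, _ => rfl
  | k + 1, h => by
      rw [chainProd, chainProd,
        chainProd_congr T M M' k (fun p hp => h p (hp.trans (Nat.lt_succ_self k))),
        h k (Nat.lt_succ_self k)]

lemma chainProd_split (T : ℕ → Type) [∀ n, Fintype (T n)] [∀ n, DecidableEq (T n)]
    (M : ∀ n, Matrix (T n) (T (n + 1)) ℝ) (m : ℕ) :
    ∀ d, chainProd T M (m + d)
      = chainProd T M (m + 0) *
          chainProd (fun p => T (m + p)) (fun p => M (m + p)) d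
  | 0 => by
      show chainProd T M (m + 0)
        = chainProd T M (m + 0) * (1 : Matrix (T (m + 0)) (T (m + 0)) ℝ)
      rw [Matrix.mul_one]
  | d + 1 => by
      show chainProd T M (m + d) * M (m + d)
        = chainProd T M (m + 0) *
            (chainProd (fun p => T (m + p)) (fun p => M (m + p)) d * M (m + d))
      rw [chainProd_split T M m d, Matrix.mul_assoc]

lemma matEntry_mul {α β γ : Type} [Fintype α] [Fintype β] [Fintype γ]
    (A : Matrix α β ℝ) (B : Matrix β γ ℝ) :
    matEntry (A * B) = ∑ r : β, (∑ a, A a r) * (∑ c, B r c) := by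
  simp only [matEntry, Matrix.mul_apply, Finset.sum_mul, Finset.mul_sum]
  rw [show (∑ x : α, ∑ c : γ, ∑ j : β, A x j * B j c)
      = ∑ x : α, ∑ j : β, ∑ c : γ, A x j * B j c from
    Finset.sum_congr rfl fun _ _ => Finset.sum_comm, Finset.sum_comm]
  exact Finset.sum_congr rfl fun b _ => Finset.sum_comm

lemma key (N K : ℕ) (I R : ℕ → ℕ)
    (UC : ∀ m, Fin K → Fin (I m) → Matrix (Fin (R m)) (Fin (R (m + 1))) ℝ)
    (k : Fin K) (m : ℕ) (hm : m ≤ N) :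
    reshapeCol N K I R UC k m
      = leftInterface N K I R UC k m * rightInterface N K I R UC k m := by
  obtain ⟨d, rfl⟩ : ∃ d, N = m + d := ⟨N - m, (Nat.add_sub_cancel' hm).symm⟩
  ext ir ic
  rw [Matrix.mul_apply]
  unfold reshapeCol blockTTEntry leftInterface rightInterface
  simp only [Matrix.of_apply]
  rw [chainProd_split _ _ m d, matEntry_mul]
  simp only [Nat.add_zero]
  rw [Nat.add_sub_cancel_left]
  refine Finset.sum_congr rfl fun x _ => ?_
  refine congrArg₂ (· * ·) ?_ ?_
  · refine Finset.sum_congr rfl fun z _ => ?_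
    refine congrFun (congrFun (chainProd_congr (fun p => Fin (R p)) _ _ m fun p hp => ?_) z) x
    have h1 : p < m + d := lt_of_lt_of_le hp (Nat.le_add_right m d)
    rw [dif_pos h1, dif_pos (⟨hp, h1⟩ : p < m ∧ p < m + d), dif_pos hp]
  · refine Finset.sum_congr rfl fun z _ => ?_
    refine congrFun (congrFun (chainProd_congr (fun p => Fin (R (m + p))) _ _ d fun p hp => ?_) x) z
    have h2 : m + p < m + d := Nat.add_lt_add_left hp m
    rw [dif_pos h2, dif_pos h2, dif_neg (Nat.not_lt.mpr (Nat.le_add_right m p))]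

/-- For a (minimal) block-n TT decomposition, each reshaped column factors
through the interface matrices: U_{k,m} = (U^{<m+1}_{(m+1)})ᵀ U^{>m}_{k,(1)} for
m ≤ n (the left factor not depending on k) and
U_{k,m} = (U^{<m+1}_{k,(m+1)})ᵀ U^{>m}_{(1)} for m > n (the right factor not
depending on k); hence span(U_{k,m}) ⊆ span((U^{<m+1}_{(m+1)})ᵀ) resp.
span(U_{k,m}ᵀ) ⊆ span((U^{>m}_{(1)})ᵀ). -/
theorem stmt_7 (N K n : ℕ) (hn : n < N) (hK : 0 < K)
    (I R : ℕ → ℕ) (hR0 : R 0 = 1) (hRN : R N = 1)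
    (UC : ∀ m, Fin K → Fin (I m) → Matrix (Fin (R m)) (Fin (R (m + 1))) ℝ)
    (hind : ∀ m, m ≠ n → ∀ k k', UC m k = UC m k') :
    (∀ (k k' : Fin K) (m : ℕ), 1 ≤ m → m ≤ n →
      reshapeCol N K I R UC k m
        = leftInterface N K I R UC k' m * rightInterface N K I R UC k m)
    ∧ (∀ (k k' : Fin K) (m : ℕ), n < m → m ≤ N →
      reshapeCol N K I R UC k m
        = leftInterface N K I R UC k m * rightInterface N K I R UC k' m) := by
  constructor
  · intro k k' m _ h2
    have hm : m ≤ N := le_of_lt (lt_of_le_of_lt h2 hn)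
    rw [key N K I R UC k m hm]
    congr 1
    unfold leftInterface
    ext ir r
    simp only [Matrix.of_apply]
    refine Finset.sum_congr rfl fun z _ => ?_
    refine congrFun (congrFun
      (chainProd_congr (fun p => Fin (R p)) _ _ m fun p hp => ?_) z) r
    rw [hind p (Nat.ne_of_lt (lt_of_lt_of_le hp h2)) k k']
  · intro k k' m h1 h2
    rw [key N K I R UC k m h2]
    congr 1
    unfold rightInterface
    ext r ic
    simp only [Matrix.of_apply]
    refine Finset.sum_congr rfl fun z _ => ?_
    refine congrFun (congrFun
      (chainProd_congr (fun p => Fin (R (m + p))) _ _ (N - m) fun p hp => ?_) r) z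
    rw [hind (m + p) (Nat.ne_of_gt (lt_of_lt_of_le h1 (Nat.le_add_right m p))) k k']
end

section
/- Let the shift matrix F ∈ ℝ^{2^N×2^N} be defined by F_{ij} = 1 if j = i+1 and 0 otherwise. With the 2×2 matrices I = [[1,0],[0,1]], J = [[0,1],[0,0]], K = [[0,0],[1,0]], and the block matrices L̃^{(N)} = [I J], L̃^{(n)} = [[I,J],[0,K]] for 2 ≤ n ≤ N−1, L̃^{(1)} = [J;K] (with blocks L^{(n)}_{q_n,q_{n-1}}), we have F = Σ_{q₁,...,q_{N-1} ∈ {1,2}} L^{(N)}_{1,q_{N-1}} ⊗ L^{(N-1)}_{q_{N-1},q_{N-2}} ⊗ ⋯ ⊗ L^{(1)}_{q₁,1}. -/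
open Matrix

/-- The 2×2 blocks I, J, K, 0 of the block matrices L̃⁽ⁿ⁾: `shiftBlock r c` is
the (r,c) block (0-based) of the middle block matrix [[I,J],[0,K]]; the top core
[I J] corresponds to row 0 and the bottom core [J;K] to column 1. -/
noncomputable def shiftBlock : Fin 2 → Fin 2 → Matrix (Fin 2) (Fin 2) ℝ :=
  fun r c =>
    if r = 0 then (if c = 0 then 1 else !![0, 1; 0, 0])
    else (if c = 1 then !![0, 0; 1, 0] else 0)

private lemma shiftStep (a i0 j0 : Fin 2) (Si Sj : ℕ) :
    (if (j0 : ℕ) + 2 * Sj = (i0 : ℕ) + 2 * Si + (a : ℕ) then (1 : ℝ) else 0)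
      = ∑ a' : Fin 2,
          shiftBlock a' a i0 j0 * (if Sj = Si + (a' : ℕ) then (1 : ℝ) else 0) := by
  fin_cases a <;> fin_cases i0 <;> fin_cases j0 <;>
    simp [shiftBlock, Fin.sum_univ_two, Matrix.one_apply] <;>
    first
      | omega
      | (split_ifs <;> first | rfl | (exfalso; omega))

private lemma shiftGen (N : ℕ) (i j : Fin N → Fin 2) (a : Fin 2) :
    (if (∑ m : Fin N, (j m).val * 2 ^ (m : ℕ))
        = (∑ m : Fin N, (i m).val * 2 ^ (m : ℕ)) + (a : ℕ) then (1 : ℝ) else 0)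
      = ∑ q : Fin (N + 1) → Fin 2,
          (if q 0 = a ∧ q (Fin.last N) = 0 then (1 : ℝ) else 0) *
            ∏ m : Fin N, shiftBlock (q m.succ) (q m.castSucc) (i m) (j m) := by
  induction N generalizing a with
  | zero =>
      rw [← Equiv.sum_comp (Equiv.funUnique (Fin 1) (Fin 2)).symm, Fin.sum_univ_two]
      fin_cases a <;> simp [Equiv.funUnique, Fin.last]
  | succ N ih =>
      have hL : (∑ m : Fin (N + 1), (j m).val * 2 ^ (m : ℕ))
          = (j 0).val + 2 * ∑ m : Fin N, (j m.succ).val * 2 ^ (m : ℕ) := by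
        rw [Fin.sum_univ_succ, Finset.mul_sum]
        simp only [Fin.val_zero, pow_zero, mul_one, Fin.val_succ, pow_succ]
        congr 1
        exact Finset.sum_congr rfl fun m _ => by ring
      have hLi : (∑ m : Fin (N + 1), (i m).val * 2 ^ (m : ℕ))
          = (i 0).val + 2 * ∑ m : Fin N, (i m.succ).val * 2 ^ (m : ℕ) := by
        rw [Fin.sum_univ_succ, Finset.mul_sum]
        simp only [Fin.val_zero, pow_zero, mul_one, Fin.val_succ, pow_succ]
        congr 1
        exact Finset.sum_congr rfl fun m _ => by ring
      rw [hL, hLi, shiftStep]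
      rw [← Equiv.sum_comp (Fin.consEquiv fun _ : Fin (N + 2) => Fin 2),
        Fintype.sum_prod_type]
      have hterm : ∀ (x : Fin 2) (q' : Fin (N + 1) → Fin 2),
          (if (Fin.consEquiv fun _ : Fin (N + 2) => Fin 2) (x, q') 0 = a ∧
              (Fin.consEquiv fun _ : Fin (N + 2) => Fin 2) (x, q') (Fin.last (N + 1)) = 0
            then (1 : ℝ) else 0) *
            ∏ m : Fin (N + 1),
              shiftBlock ((Fin.consEquiv fun _ : Fin (N + 2) => Fin 2) (x, q') m.succ)
                ((Fin.consEquiv fun _ : Fin (N + 2) => Fin 2) (x, q') m.castSucc) (i m) (j m)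
          = if x = a then
              (if q' (Fin.last N) = 0 then (1 : ℝ) else 0) *
                (shiftBlock (q' 0) x (i 0) (j 0) *
                  ∏ m : Fin N, shiftBlock (q' m.succ) (q' m.castSucc) (i m.succ) (j m.succ))
            else 0 := by
        intro x q'
        simp only [Fin.consEquiv_apply]
        rw [Fin.prod_univ_succ]
        simp only [Fin.cons_zero, ← Fin.succ_last, ← Fin.succ_castSucc, Fin.cons_succ,
          Fin.castSucc_zero, ite_and, ite_mul, zero_mul]
      simp only [hterm]
      rw [Finset.sum_comm]
      simp only [Finset.sum_ite_eq', Finset.mem_univ, if_true]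
      have hcollapse : ∀ q' : Fin (N + 1) → Fin 2,
          (if q' (Fin.last N) = 0 then (1 : ℝ) else 0) *
            (shiftBlock (q' 0) a (i 0) (j 0) *
              ∏ m : Fin N, shiftBlock (q' m.succ) (q' m.castSucc) (i m.succ) (j m.succ))
          = ∑ a' : Fin 2, shiftBlock a' a (i 0) (j 0) *
              ((if q' 0 = a' ∧ q' (Fin.last N) = 0 then (1 : ℝ) else 0) *
                ∏ m : Fin N, shiftBlock (q' m.succ) (q' m.castSucc) (i m.succ) (j m.succ)) := by
        intro q'
        rcases Fin.exists_fin_two.mp ⟨q' 0, rfl⟩ with h | h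
        all_goals {
          by_cases hP : q' (Fin.last N) = 0 <;>
            simp [Fin.sum_univ_two, hP, *] }
      rw [Finset.sum_congr rfl fun q' _ => hcollapse q', Finset.sum_comm]
      refine Finset.sum_congr rfl fun a' _ => ?_
      rw [← Finset.mul_sum, ih (fun m => i m.succ) (fun m => j m.succ) a', Finset.mul_sum]

/-- Explicit TT (Kronecker-product) representation of the 2^N × 2^N shift
matrix F (ones on the first superdiagonal), stated entrywise under the
little-endian multi-index convention (i₁,...,i_N) = i₁ + 2 i₂ + ⋯ + 2^{N-1} i_N:
F = Σ_{q} L^{(N)}_{1,q_{N-1}} ⊗ ⋯ ⊗ L^{(1)}_{q₁,1}, where the boundary rank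
indices are fixed (encoded by the indicator on q 0 and q N). -/
theorem stmt_17 (N : ℕ) (i j : Fin N → Fin 2) :
    (if (∑ m : Fin N, (j m).val * 2 ^ (m : ℕ))
        = (∑ m : Fin N, (i m).val * 2 ^ (m : ℕ)) + 1 then (1 : ℝ) else 0)
      = ∑ q : Fin (N + 1) → Fin 2,
          (if q 0 = 1 ∧ q (Fin.last N) = 0 then (1 : ℝ) else 0) *
            ∏ m : Fin N, shiftBlock (q m.succ) (q m.castSucc) (i m) (j m) := by
  simpa using shiftGen N i j 1
end
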